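/- arXiv:2103.04758 — 2 statements merged into one kernel-verified Lean document; each statement's English description precedes it below -/
import Mathlib

section
/- Let W = (x^2 - 1)(x^3 + a x^2 + b x + r) with a > 0, b ≠ 0, r ≠ 0, b ≠ 1, r ≠ a, so that all coefficients of W = x^5 + a x^4 + (b-1) x^3 + (r-a) x^2 - b x - r are nonzero. If the sign pattern of W has exactly one more sign change than the sign pattern of x^3 + a x^2 + b x + r, then the sign pattern of W contains, in some four consecutive positions, one of the configurations (+,+,-,-), (-,-,+,+), (+,-,-,+), (-,+,+,-). -/
open Polynomial

/-- The number of sign changes in the coefficient sequence of a polynomial. -/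
noncomputable def signChanges (Q : Polynomial ℝ) : ℕ :=
  ((Finset.range Q.natDegree).filter (fun j => Q.coeff j * Q.coeff (j + 1) < 0)).card

/-- The sign pattern of `Q` (read from leading coefficient to constant term) contains
one of the configurations `A = (+,+,-,-)`, `B = (-,-,+,+)`, `C = (+,-,-,+)`,
`D = (-,+,+,-)` in four consecutive positions. -/
def hasConfig (Q : Polynomial ℝ) : Prop :=
  ∃ j, j + 3 ≤ Q.natDegree ∧
    ((0 < Q.coeff (Q.natDegree - j) ∧ 0 < Q.coeff (Q.natDegree - (j + 1)) ∧
        Q.coeff (Q.natDegree - (j + 2)) < 0 ∧ Q.coeff (Q.natDegree - (j + 3)) < 0) ∨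
     (Q.coeff (Q.natDegree - j) < 0 ∧ Q.coeff (Q.natDegree - (j + 1)) < 0 ∧
        0 < Q.coeff (Q.natDegree - (j + 2)) ∧ 0 < Q.coeff (Q.natDegree - (j + 3))) ∨
     (0 < Q.coeff (Q.natDegree - j) ∧ Q.coeff (Q.natDegree - (j + 1)) < 0 ∧
        Q.coeff (Q.natDegree - (j + 2)) < 0 ∧ 0 < Q.coeff (Q.natDegree - (j + 3))) ∨
     (Q.coeff (Q.natDegree - j) < 0 ∧ 0 < Q.coeff (Q.natDegree - (j + 1)) ∧
        0 < Q.coeff (Q.natDegree - (j + 2)) ∧ Q.coeff (Q.natDegree - (j + 3)) < 0))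

set_option maxHeartbeats 1000000 in
/-- Degree-5 case: for `W = (x²-1)(x³ + a x² + b x + r)` with `a > 0` and all
coefficients of `W` nonzero, if the sign pattern of `W` has exactly one more sign change
than that of `x³ + a x² + b x + r`, then the sign pattern of `W` contains one of the
configurations `(+,+,-,-)`, `(-,-,+,+)`, `(+,-,-,+)`, `(-,+,+,-)`. -/
theorem degree_five_case (a b r : ℝ) (ha : 0 < a) (hb : b ≠ 0) (hr : r ≠ 0)
    (hb1 : b ≠ 1) (hra : r ≠ a)
    (hsc : signChanges ((X ^ 2 - 1) * (X ^ 3 + C a * X ^ 2 + C b * X + C r)) =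
      signChanges (X ^ 3 + C a * X ^ 2 + C b * X + C r) + 1) :
    hasConfig ((X ^ 2 - 1) * (X ^ 3 + C a * X ^ 2 + C b * X + C r)) := by
  have hWexp : ((X ^ 2 - 1) * (X ^ 3 + C a * X ^ 2 + C b * X + C r) : ℝ[X]) =
      X ^ 5 + C a * X ^ 4 + (C b - 1) * X ^ 3 + (C r - C a) * X ^ 2 - C b * X - C r := by
    ring
  have hdeg : ((X ^ 2 - 1) * (X ^ 3 + C a * X ^ 2 + C b * X + C r) : ℝ[X]).natDegree = 5 := by
    rw [hWexp]; compute_degree!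
  have hdP : (X ^ 3 + C a * X ^ 2 + C b * X + C r : ℝ[X]).natDegree = 3 := by compute_degree!
  have c0 : ((X ^ 2 - 1) * (X ^ 3 + C a * X ^ 2 + C b * X + C r) : ℝ[X]).coeff 0 = -r := by
    rw [hWexp]; simp [coeff_X_pow, sub_mul, coeff_sub, coeff_C_mul, coeff_C]
  have c1 : ((X ^ 2 - 1) * (X ^ 3 + C a * X ^ 2 + C b * X + C r) : ℝ[X]).coeff 1 = -b := by
    rw [hWexp]; simp [coeff_X_pow, sub_mul, coeff_sub, coeff_C_mul, coeff_C]
  have c2 : ((X ^ 2 - 1) * (X ^ 3 + C a * X ^ 2 + C b * X + C r) : ℝ[X]).coeff 2 = r - a := by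
    rw [hWexp]; simp [coeff_X_pow, sub_mul, coeff_sub, coeff_C_mul, coeff_C]
  have c3 : ((X ^ 2 - 1) * (X ^ 3 + C a * X ^ 2 + C b * X + C r) : ℝ[X]).coeff 3 = b - 1 := by
    rw [hWexp]; simp [coeff_X_pow, sub_mul, coeff_sub, coeff_C_mul, coeff_C]
  have c4 : ((X ^ 2 - 1) * (X ^ 3 + C a * X ^ 2 + C b * X + C r) : ℝ[X]).coeff 4 = a := by
    rw [hWexp]; simp [coeff_X_pow, sub_mul, coeff_sub, coeff_C_mul, coeff_C]
  have c5 : ((X ^ 2 - 1) * (X ^ 3 + C a * X ^ 2 + C b * X + C r) : ℝ[X]).coeff 5 = 1 := by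
    rw [hWexp]; simp [coeff_X_pow, sub_mul, coeff_sub, coeff_C_mul, coeff_C]
  have p0 : (X ^ 3 + C a * X ^ 2 + C b * X + C r : ℝ[X]).coeff 0 = r := by
    simp [coeff_X_pow, coeff_C]
  have p1 : (X ^ 3 + C a * X ^ 2 + C b * X + C r : ℝ[X]).coeff 1 = b := by
    simp [coeff_X_pow, coeff_C]
  have p2 : (X ^ 3 + C a * X ^ 2 + C b * X + C r : ℝ[X]).coeff 2 = a := by
    simp [coeff_X_pow, coeff_C]
  have p3 : (X ^ 3 + C a * X ^ 2 + C b * X + C r : ℝ[X]).coeff 3 = 1 := by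
    simp [coeff_X_pow, coeff_C]
  unfold signChanges at hsc
  rw [hdeg, hdP, Finset.card_filter, Finset.card_filter] at hsc
  simp only [Finset.sum_range_succ, Finset.sum_range_zero, Nat.reduceAdd, zero_add,
    c0, c1, c2, c3, c4, c5, p0, p1, p2, p3] at hsc
  unfold hasConfig
  rw [hdeg]
  rcases hb.lt_or_gt with hbn | hbp
  · -- b < 0, hence b - 1 < 0
    have hu : b - 1 < 0 := by linarith
    rcases hr.lt_or_gt with hrn | hrp
    · -- r < 0, hence r - a < 0
      have hv : r - a < 0 := by linarith
      refine ⟨0, by norm_num, Or.inl ⟨?_, ?_, ?_, ?_⟩⟩ <;> norm_num [c0,c1,c2,c3,c4,c5] <;> linarith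
    · rcases (sub_ne_zero.mpr hra).lt_or_gt with hv | hv
      · -- (-,-,-,+): j=0 config A
        refine ⟨0, by norm_num, Or.inl ⟨?_, ?_, ?_, ?_⟩⟩ <;> norm_num [c0,c1,c2,c3,c4,c5] <;> linarith
      · -- (-,+,-,+): j=2 config D
        refine ⟨2, by norm_num, Or.inr (Or.inr (Or.inr ⟨?_, ?_, ?_, ?_⟩))⟩ <;>
          norm_num [c0,c1,c2,c3,c4,c5] <;> linarith
  · rcases (sub_ne_zero.mpr hb1).lt_or_gt with hu | hu
    · -- b-1 < 0, b > 0
      rcases hr.lt_or_gt with hrn | hrp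
      · have hv : r - a < 0 := by linarith
        refine ⟨0, by norm_num, Or.inl ⟨?_, ?_, ?_, ?_⟩⟩ <;> norm_num [c0,c1,c2,c3,c4,c5] <;> linarith
      · rcases (sub_ne_zero.mpr hra).lt_or_gt with hv | hv
        · refine ⟨0, by norm_num, Or.inl ⟨?_, ?_, ?_, ?_⟩⟩ <;> norm_num [c0,c1,c2,c3,c4,c5] <;> linarith
        · -- u<0, v>0, b>0, r>0 : contradiction from hsc
          exfalso
          have hrp : 0 < r := by linarith
          have h1 : ¬ (-r * -b < 0) := by nlinarith
          have h2 : -b * (r - a) < 0 := by nlinarith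
          have h3 : (r - a) * (b - 1) < 0 := by nlinarith
          have h4 : (b - 1) * a < 0 := by nlinarith
          have h5 : ¬ (a * (1 : ℝ) < 0) := by nlinarith
          have h6 : ¬ (r * b < 0) := by nlinarith
          have h7 : ¬ (b * a < 0) := by nlinarith
          simp only [h1, h2, h3, h4, h5, h6, h7, if_true, if_false] at hsc
          omega
    · -- b - 1 > 0, b > 1 > 0
      rcases (sub_ne_zero.mpr hra).lt_or_gt with hv | hv
      · -- (+,-,+,*): j=1 config A
        refine ⟨1, by norm_num, Or.inl ⟨?_, ?_, ?_, ?_⟩⟩ <;> norm_num [c0,c1,c2,c3,c4,c5] <;> linarith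
      · -- v>0 hence r>0 : (+,+,+,+): j=2 config A
        have hrp : 0 < r := by linarith
        refine ⟨2, by norm_num, Or.inl ⟨?_, ?_, ?_, ?_⟩⟩ <;> norm_num [c0,c1,c2,c3,c4,c5] <;> linarith
end

section
/- Let W = (x^2-1)(x^3 + a x^2 + b x + r) = x^5 + a x^4 + (b-1)x^3 + (r-a)x^2 - b x - r, with a > 0 and all displayed coefficients nonzero. If the number of sign changes of the coefficient sequence of W equals one plus the number of sign changes of (1, a, b, r), then the sign pattern of W contains one of the configurations (+,+,-,-), (-,-,+,+), (+,-,-,+), (-,+,+,-). -/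
open Polynomial

/-- Degree-5 base case: for `W = (x²-1)(x³ + a x² + b x + r)` with `a > 0` and all
coefficients of `W` nonzero, if the number of sign changes of `W` equals one plus the
number of sign changes of `(1, a, b, r)`, then the sign pattern of `W` contains one of
the configurations `(+,+,-,-)`, `(-,-,+,+)`, `(+,-,-,+)`, `(-,+,+,-)`. -/
theorem degree_five_base_case (a b r : ℝ) (ha : 0 < a) (hb : b ≠ 0) (hr : r ≠ 0)
    (hb1 : b ≠ 1) (hra : r ≠ a)
    (hsc : signChanges ((X ^ 2 - 1) * (X ^ 3 + C a * X ^ 2 + C b * X + C r)) =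
      signChanges (X ^ 3 + C a * X ^ 2 + C b * X + C r) + 1) :
    hasConfig ((X ^ 2 - 1) * (X ^ 3 + C a * X ^ 2 + C b * X + C r)) := by
  have hW : (X ^ 2 - 1) * (X ^ 3 + C a * X ^ 2 + C b * X + C r) =
      X ^ 5 + C a * X ^ 4 + (C b - 1) * X ^ 3 + (C r - C a) * X ^ 2 - C b * X - C r := by
    ring
  rw [hW] at hsc ⊢
  set W := X ^ 5 + C a * X ^ 4 + (C b - 1) * X ^ 3 + (C r - C a) * X ^ 2 - C b * X - C r with hWdef
  have hdeg : W.natDegree = 5 := by rw [hWdef]; compute_degree!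
  have hc0 : W.coeff 0 = -r := by rw [hWdef]; simp [sub_mul, coeff_X, coeff_one]
  have hc1 : W.coeff 1 = -b := by rw [hWdef]; simp [sub_mul, coeff_X, coeff_one]
  have hc2 : W.coeff 2 = r - a := by rw [hWdef]; simp [sub_mul, coeff_X, coeff_one]
  have hc3 : W.coeff 3 = b - 1 := by rw [hWdef]; simp [sub_mul, coeff_X, coeff_one]
  have hc4 : W.coeff 4 = a := by rw [hWdef]; simp [sub_mul, coeff_X, coeff_one]
  have hc5 : W.coeff 5 = 1 := by rw [hWdef]; simp [sub_mul, coeff_X, coeff_one]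
  rcases hb.lt_or_gt with hbneg | hbpos
  · -- b < 0
    rcases hra.lt_or_gt with hu | hu
    · -- r < a
      rcases hr.lt_or_gt with hrneg | hrpos
      · -- pattern +,+,-,-,+,+ : C at j=1
        refine ⟨1, by omega, Or.inr (Or.inr (Or.inl ?_))⟩
        rw [hdeg]
        norm_num [hc1, hc2, hc3, hc4]
        refine ⟨by linarith, by linarith, by linarith, by linarith⟩
      · -- pattern +,+,-,-,+,- : A at j=0
        refine ⟨0, by omega, Or.inl ?_⟩
        rw [hdeg]
        norm_num [hc2, hc3, hc4, hc5]
        refine ⟨by linarith, by linarith, by linarith⟩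
    · -- a < r, so r > 0
      have hrpos : 0 < r := lt_trans ha hu
      -- pattern +,+,-,+,+,- : D at j=2
      refine ⟨2, by omega, Or.inr (Or.inr (Or.inr ?_))⟩
      rw [hdeg]
      norm_num [hc0, hc1, hc2, hc3]
      refine ⟨by linarith, by linarith, by linarith, by linarith⟩
  · -- 0 < b
    rcases hb1.lt_or_gt with hblt | hbgt
    · -- b < 1 : need r < a from hsc, else contradiction
      rcases hra.lt_or_gt with hu | hu
      · -- r < a : pattern +,+,-,-,-,? : A at j=0
        refine ⟨0, by omega, Or.inl ?_⟩
        rw [hdeg]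
        norm_num [hc2, hc3, hc4, hc5]
        refine ⟨by linarith, by linarith, by linarith⟩
      · -- a < r : contradiction with hsc
        exfalso
        have hdegP : (X ^ 3 + C a * X ^ 2 + C b * X + C r).natDegree = 3 := by
          compute_degree!
        have hrpos : 0 < r := lt_trans ha hu
        rw [signChanges, signChanges, hdeg, hdegP, Finset.card_filter, Finset.card_filter,
          Finset.sum_range_succ, Finset.sum_range_succ, Finset.sum_range_succ,
          Finset.sum_range_succ, Finset.sum_range_succ, Finset.sum_range_zero,
          Finset.sum_range_succ, Finset.sum_range_succ, Finset.sum_range_succ,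
          Finset.sum_range_zero, hWdef] at hsc
        norm_num [coeff_X, coeff_one, sub_mul] at hsc
        have e0 : ¬ (r * b < 0) := by nlinarith
        have e1 : 0 < b * (r - a) := by nlinarith
        have e2 : r * (b - 1) < a * (b - 1) := by nlinarith
        have e3 : b * a < a := by nlinarith
        have e4 : ¬ (a < 0) := by linarith
        have e5 : ¬ (b * a < 0) := by nlinarith
        simp [e0, e1, e2, e3, e4, e5] at hsc
    · -- 1 < b
      rcases hra.lt_or_gt with hu | hu
      · -- r < a
        rcases hr.lt_or_gt with hrneg | hrpos
        · -- pattern +,+,+,-,-,+ : C at j=2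
          refine ⟨2, by omega, Or.inr (Or.inr (Or.inl ?_))⟩
          rw [hdeg]
          norm_num [hc0, hc1, hc2, hc3]
          refine ⟨by linarith, by linarith, by linarith, by linarith⟩
        · -- pattern +,+,+,-,-,- : A at j=1
          refine ⟨1, by omega, Or.inl ?_⟩
          rw [hdeg]
          norm_num [hc1, hc2, hc3, hc4]
          refine ⟨by linarith, by linarith, by linarith, by linarith⟩
      · -- a < r, r > 0 : pattern +,+,+,+,-,- : A at j=2
        have hrpos : 0 < r := lt_trans ha hu
        refine ⟨2, by omega, Or.inl ?_⟩
        rw [hdeg]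
        norm_num [hc0, hc1, hc2, hc3]
        refine ⟨by linarith, by linarith, by linarith, by linarith⟩
end
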